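/- Strengthened ping-pong conclusion: under the hypotheses of the ping-pong lemma for right-angled Artin groups, if U is any subset of X ∖ ⋃ᵢ S_i such that g_i(U) ⊆ S_i⁺ and g_i⁻¹(U) ⊆ S_i⁻ for all i, then the sets {g(U) : g ∈ A_Γ} are pairwise disjoint for distinct elements g of A_Γ. -/

import Mathlib

/-- Relators of a right-angled Artin group: commutators of adjacent generators. -/
def raagRels {V : Type*} (G : SimpleGraph V) : Set (FreeGroup V) :=
  {r | ∃ i j, G.Adj i j ∧
    r = FreeGroup.of i * FreeGroup.of j * (FreeGroup.of i)⁻¹ * (FreeGroup.of j)⁻¹}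

/-- The right-angled Artin group of a simple graph. -/
def RAAG {V : Type*} (G : SimpleGraph V) := PresentedGroup (raagRels G)

noncomputable instance {V : Type*} (G : SimpleGraph V) : Group (RAAG G) := by
  unfold RAAG; infer_instance

/-- The standard generators of a right-angled Artin group. -/
def raagGen {V : Type*} (G : SimpleGraph V) (v : V) : RAAG G :=
  PresentedGroup.of v

namespace RaagPP

variable {n : ℕ} (G : SimpleGraph (Fin n))

/-- Adjacent generators commute. -/
lemma adj_commute {i j : Fin n} (h : G.Adj i j) :
    Commute (raagGen G i) (raagGen G j) := by
  have hmem : (FreeGroup.of i * FreeGroup.of j * (FreeGroup.of i)⁻¹ * (FreeGroup.of j)⁻¹)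
      ∈ Subgroup.normalClosure (raagRels G) :=
    Subgroup.subset_normalClosure ⟨i, j, h, rfl⟩
  have h1 : (PresentedGroup.mk (raagRels G))
      (FreeGroup.of i * FreeGroup.of j * (FreeGroup.of i)⁻¹ * (FreeGroup.of j)⁻¹) = 1 :=
    (QuotientGroup.eq_one_iff _).2 hmem
  rw [map_mul, map_mul, map_inv, map_inv] at h1
  open scoped commutatorElement in
  have : ⁅raagGen G i, raagGen G j⁆ = 1 := h1
  exact commutatorElement_eq_one_iff_commute.1 this

/-- Commuting generators are equal or adjacent. -/
lemma commute_adj {i j : Fin n} (hij : i ≠ j)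
    (h : Commute (raagGen G i) (raagGen G j)) : G.Adj i j := by
  by_contra hadj
  classical
  set f : Fin n → Equiv.Perm (Fin 3) :=
    fun k => if k = i then Equiv.swap 0 1 else if k = j then Equiv.swap 1 2 else 1 with hf
  have hlift : ∀ r ∈ raagRels G, (FreeGroup.lift f) r = 1 := by
    rintro r ⟨a, b, hab, rfl⟩
    have hcab : Commute (f a) (f b) := by
      by_cases hai : a = i
      · by_cases hbi : b = i
        · exact absurd hab (by rw [hai, hbi]; exact G.irrefl)
        · have hbj : b ≠ j := fun hbj => hadj (by rw [← hai, ← hbj]; exact hab)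
          have hb1 : f b = 1 := by simp [hf, hbi, hbj]
          rw [hb1]; exact Commute.one_right _
      · by_cases haj : a = j
        · by_cases hbj : b = j
          · exact absurd hab (by rw [haj, hbj]; exact G.irrefl)
          · by_cases hbi : b = i
            · exact absurd (G.adj_symm (by rw [← haj, ← hbi]; exact hab)) hadj
            · have hb1 : f b = 1 := by simp [hf, hbi, hbj]
              rw [hb1]; exact Commute.one_right _
        · have ha1 : f a = 1 := by simp [hf, hai, haj]
          rw [ha1]; exact Commute.one_left _
    have := commutatorElement_eq_one_iff_commute.2 hcab
    rw [commutatorElement_def] at this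
    rw [map_mul, map_mul, map_inv, map_inv, FreeGroup.lift_apply_of, FreeGroup.lift_apply_of]
    exact this
  have hF := congrArg (fun z => (PresentedGroup.toGroup hlift) z) h.eq
  replace hF : (PresentedGroup.toGroup hlift) (raagGen G i) * (PresentedGroup.toGroup hlift) (raagGen G j)
      = (PresentedGroup.toGroup hlift) (raagGen G j) * (PresentedGroup.toGroup hlift) (raagGen G i) :=
    (map_mul _ _ _).symm.trans (hF.trans (map_mul _ _ _))
  have hgi : (PresentedGroup.toGroup hlift) (raagGen G i) = Equiv.swap 0 1 := by
    have hx := PresentedGroup.toGroup.of hlift (x := i)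
    refine hx.trans ?_
    simp [hf]
  have hgj : (PresentedGroup.toGroup hlift) (raagGen G j) = Equiv.swap 1 2 := by
    have hx := PresentedGroup.toGroup.of hlift (x := j)
    refine hx.trans ?_
    simp [hf, hij.symm]
  rw [hgi, hgj] at hF
  rw [Equiv.ext_iff] at hF
  have := hF 0
  simp [Equiv.Perm.mul_apply, Equiv.swap_apply_of_ne_of_ne] at this

/-- A signed generator. -/
noncomputable def rGen (p : Fin n × Bool) : RAAG G :=
  if p.2 then raagGen G p.1 else (raagGen G p.1)⁻¹

/-- Evaluation of a word. -/
noncomputable def rEv (L : List (Fin n × Bool)) : RAAG G :=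
  (L.map (rGen G)).prod

lemma rEv_nil : rEv G [] = 1 := rfl

lemma rEv_cons (p : Fin n × Bool) (L : List (Fin n × Bool)) :
    rEv G (p :: L) = rGen G p * rEv G L := by
  simp [rEv]

lemma rEv_append (A B : List (Fin n × Bool)) :
    rEv G (A ++ B) = rEv G A * rEv G B := by
  simp [rEv]

lemma rGen_commute {p q : Fin n × Bool} (h : G.Adj p.1 q.1) :
    Commute (rGen G p) (rGen G q) := by
  have hc : Commute (raagGen G p.1) (raagGen G q.1) := adj_commute G h
  unfold rGen
  rcases p with ⟨a, b⟩ <;> rcases q with ⟨c, d⟩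
  cases b <;> cases d <;> simp <;>
    first
      | exact hc
      | exact hc.inv_left
      | exact hc.inv_right
      | exact hc.inv_left.inv_right

lemma rGen_cancel (i : Fin n) (b : Bool) : rGen G (i, b) * rGen G (i, !b) = 1 := by
  cases b <;> simp [rGen]

/-- Pull a letter with adjacent prefix to the front. -/
lemma rEv_extract {A : List (Fin n × Bool)} (p : Fin n × Bool) (B : List (Fin n × Bool))
    (hA : ∀ q ∈ A, G.Adj p.1 q.1) :
    rEv G (A ++ p :: B) = rGen G p * rEv G (A ++ B) := by
  have hc : Commute (rGen G p) (rEv G A) := by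
    refine Commute.list_prod_right _ _ ?_
    intro x hx
    rcases List.mem_map.1 hx with ⟨q, hq, rfl⟩
    exact rGen_commute G (hA q hq)
  rw [rEv_append, rEv_cons, rEv_append, ← mul_assoc, ← hc.eq, mul_assoc]

/-- `(i,b)` can be shuffled to the front of `L`. -/
def IsHead (L : List (Fin n × Bool)) (i : Fin n) (b : Bool) : Prop :=
  ∃ A B, (∀ q ∈ A, G.Adj i q.1) ∧ L = A ++ (i, b) :: B

/-- `L` contains a cancelling pair joined by letters adjacent to it. -/
def Reducible (L : List (Fin n × Bool)) : Prop :=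
  ∃ (A B C : List (Fin n × Bool)) (i : Fin n) (b : Bool),
    (∀ q ∈ B, G.Adj i q.1) ∧ L = A ++ (i, b) :: (B ++ (i, !b) :: C)

lemma not_eq_not (b : Bool) : b ≠ !b := by cases b <;> simp

lemma head_head_reducible {L : List (Fin n × Bool)} {i : Fin n} {b : Bool}
    (h1 : IsHead G L i b) (h2 : IsHead G L i (!b)) : Reducible G L := by
  obtain ⟨A, B, hA, rfl⟩ := h1
  obtain ⟨A', B', hA', hL⟩ := h2
  rcases List.append_eq_append_iff.1 hL with ⟨a', ha1, ha2⟩ | ⟨c', hc1, hc2⟩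
  · -- A' = A ++ a', (i,b) :: B = a' ++ (i,!b) :: B'
    cases a' with
    | nil => simp [not_eq_not] at ha2
    | cons q D =>
      simp only [List.cons_append] at ha2
      obtain ⟨rfl, hB⟩ := List.cons_eq_cons.mp ha2
      refine ⟨A, D, B', i, b, fun q hq => hA' q (by simp [ha1, hq]), by rw [hB]⟩
  · -- A = A' ++ c', (i,!b) :: B' = c' ++ (i,b) :: B
    cases c' with
    | nil => simp [not_eq_not] at hc2
    | cons q D =>
      simp only [List.cons_append] at hc2
      obtain ⟨hq, hB'⟩ := List.cons_eq_cons.mp hc2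
      refine ⟨A', D, B, i, !b, fun q hq => hA q (by simp [hc1, hq]), ?_⟩
      rw [hc1, ← hq]
      simp [Bool.not_not]

/-- Removing a head letter preserves irreducibility. -/
lemma remove_head_not_reducible {A B : List (Fin n × Bool)} {p : Fin n × Bool}
    (hred : ¬ Reducible G (A ++ p :: B)) (hA : ∀ q ∈ A, G.Adj p.1 q.1) :
    ¬ Reducible G (A ++ B) := by
  rintro ⟨P, Q, R, j, c, hQ, hPQ⟩
  apply hred
  rcases List.append_eq_append_iff.1 hPQ with ⟨a', ha1, ha2⟩ | ⟨c', hc1, hc2⟩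
  · -- P = A ++ a', B = a' ++ (j,c) :: Q ++ (j,!c) :: R
    exact ⟨A ++ p :: a', Q, R, j, c, hQ, by rw [ha2]; simp⟩
  · -- A = P ++ c', (j,c) :: Q ++ (j,!c) :: R = c' ++ B
    cases c' with
    | nil =>
      simp at hc2
      exact ⟨P ++ [p], Q, R, j, c, hQ, by rw [hc1, ← hc2]; simp⟩
    | cons q D =>
      simp only [List.cons_append] at hc2
      obtain ⟨rfl, hDB⟩ := List.cons_eq_cons.mp hc2
      -- now A = P ++ (j,c) :: D  and  Q ++ (j,!c) :: R = D ++ B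
      have hjp : G.Adj j p.1 := by
        have := hA (j, c) (by simp [hc1])
        exact (G.adj_symm this)
      rcases List.append_eq_append_iff.1 hDB with ⟨a', hb1, hb2⟩ | ⟨c'', hd1, hd2⟩
      · -- D = Q ++ a', (j,!c) :: R = a' ++ B
        cases a' with
        | nil =>
          simp at hb2
          refine ⟨P, Q ++ [p], R, j, c, ?_, ?_⟩
          · intro q hq
            rcases List.mem_append.1 hq with hq | hq
            · exact hQ q hq
            · simp at hq; subst hq; exact hjp
          · rw [hc1, hb1, ← hb2]; simp
        | cons r E =>
          simp only [List.cons_append] at hb2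
          obtain ⟨rfl, hRE⟩ := List.cons_eq_cons.mp hb2
          -- R = E ++ B, A = P ++ (j,c) :: Q ++ (j,!c) :: E
          exact ⟨P, Q, E ++ p :: B, j, c, hQ, by rw [hc1, hb1]; simp⟩
      · -- Q = D ++ c'', B = c'' ++ (j,!c) :: R
        refine ⟨P, D ++ p :: c'', R, j, c, ?_, ?_⟩
        · intro q hq
          rcases List.mem_append.1 hq with hq | hq
          · exact hQ q (by simp [hd1, hq])
          · rcases List.mem_cons.1 hq with rfl | hq
            · exact hjp
            · exact hQ q (by simp [hd1, hq])
        · rw [hc1, hd2]; simp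
  done

/-- After removing a head letter `(i,b)`, no head `(i,!b)` can appear. -/
lemma remove_head_not_head {A B : List (Fin n × Bool)} {i : Fin n} {b : Bool}
    (hred : ¬ Reducible G (A ++ (i, b) :: B)) (hA : ∀ q ∈ A, G.Adj i q.1) :
    ¬ IsHead G (A ++ B) i (!b) := by
  rintro ⟨P, Q, hP, hPQ⟩
  apply hred
  rcases List.append_eq_append_iff.1 hPQ with ⟨a', ha1, ha2⟩ | ⟨c', hc1, hc2⟩
  · -- P = A ++ a', B = a' ++ (i,!b) :: Q
    refine ⟨A, a', Q, i, b, ?_, by rw [ha2]⟩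
    intro q hq
    exact hP q (by simp [ha1, hq])
  · cases c' with
    | nil =>
      simp at hc2
      exact ⟨P, [], Q, i, b, by simp, by rw [hc1, ← hc2]; simp⟩
    | cons q D =>
      simp only [List.cons_append] at hc2
      obtain ⟨rfl, _⟩ := List.cons_eq_cons.mp hc2
      have := hA (i, !b) (by simp [hc1])
      exact absurd this (G.irrefl)

/-- Inserting a letter adjacent to a head preserves headness. -/
lemma insert_head {A B : List (Fin n × Bool)} {i j : Fin n} {b c : Bool}
    (hadj : G.Adj i j) (h : IsHead G (A ++ B) j c) :
    IsHead G (A ++ (i, b) :: B) j c := by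
  obtain ⟨P, Q, hP, hPQ⟩ := h
  rcases List.append_eq_append_iff.1 hPQ with ⟨a', ha1, ha2⟩ | ⟨c', hc1, hc2⟩
  · -- P = A ++ a', B = a' ++ (j,c) :: Q
    refine ⟨A ++ (i, b) :: a', Q, ?_, by rw [ha2]; simp⟩
    intro q hq
    rcases List.mem_append.1 hq with hq | hq
    · exact hP q (by simp [ha1, hq])
    · rcases List.mem_cons.1 hq with rfl | hq
      · exact G.adj_symm hadj
      · exact hP q (by simp [ha1, hq])
  · cases c' with
    | nil =>
      simp at hc2
      refine ⟨P ++ [(i, b)], Q, ?_, by rw [hc1, ← hc2]; simp⟩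
      intro q hq
      rcases List.mem_append.1 hq with hq | hq
      · exact hP q hq
      · simp at hq; subst hq; exact G.adj_symm hadj
    | cons q D =>
      simp only [List.cons_append] at hc2
      obtain ⟨rfl, hQD⟩ := List.cons_eq_cons.mp hc2
      exact ⟨P, D ++ (i, b) :: B, hP, by rw [hc1]; simp⟩

/-- Iteratively extract all heads with index `i` (they all have sign `b`). -/
lemma extract_all : ∀ (N : ℕ) (L : List (Fin n × Bool)), L.length ≤ N → ¬ Reducible G L →
    ∀ (i : Fin n) (b : Bool), ¬ IsHead G L i (!b) →
    ∃ (m : ℕ) (L₂ : List (Fin n × Bool)),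
      rEv G L = (rGen G (i, b)) ^ m * rEv G L₂ ∧ ¬ Reducible G L₂ ∧
      (∀ c, ¬ IsHead G L₂ i c) ∧ L₂.length + m = L.length ∧
      (∀ j c, G.Adj i j → IsHead G L₂ j c → IsHead G L j c) ∧ (L₂ = L ∨ 1 ≤ m) := by
  intro N
  induction N with
  | zero =>
    intro L hlen hred i b hnb
    refine ⟨0, L, by simp, hred, ?_, by simp, fun j c _ h => h, Or.inl rfl⟩
    intro c ⟨A, B, _, hL⟩
    have : L.length = 0 := le_antisymm hlen (Nat.zero_le _)
    rw [hL] at this; simp at this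
  | succ N ih =>
    intro L hlen hred i b hnb
    by_cases hh : ∃ c, IsHead G L i c
    · obtain ⟨c, A, B, hA, rfl⟩ := hh
      have hch : IsHead G (A ++ (i, c) :: B) i c := ⟨A, B, hA, rfl⟩
      have hcb : c = b := by
        have hne : c ≠ !b := fun hc => hnb (hc ▸ hch)
        cases b <;> cases c <;> simp_all
      subst hcb
      have hev := rEv_extract G (i, c) B hA
      have hred2 := remove_head_not_reducible G hred hA
      have hnh2 := remove_head_not_head G hred hA
      have hlen2 : (A ++ B).length ≤ N := by
        have := hlen; simp [List.length_append] at this ⊢; omega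
      obtain ⟨m, L₂, e1, e2, e3, e4, e5, _⟩ := ih (A ++ B) hlen2 hred2 i c hnh2
      refine ⟨m + 1, L₂, ?_, e2, e3, ?_, ?_, Or.inr (by omega)⟩
      · rw [hev, e1, ← mul_assoc, ← pow_succ']
      · simp [List.length_append] at e4 ⊢; omega
      · intro j c' hadj hh2
        exact insert_head G hadj (e5 j c' hadj hh2)
    · push_neg at hh
      exact ⟨0, L, by simp, hred, hh, by simp, fun j c _ h => h, Or.inl rfl⟩

section Main

variable {X : Type*} (φ : RAAG G →* Equiv.Perm X) (Sp Sm S : Fin n → Set X) (U : Set X)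

lemma pow_img {σ : Equiv.Perm X} {W T : Set X} (h0 : ⇑σ '' W ⊆ T) (hT : ⇑σ '' T ⊆ T) :
    ∀ k, ⇑(σ ^ (k + 1)) '' W ⊆ T := by
  intro k
  induction k with
  | zero => simpa using h0
  | succ k ihk =>
    rw [pow_succ', Equiv.Perm.coe_mul, Set.image_comp]
    exact (Set.image_mono ihk).trans hT

lemma pow_img_eq {σ : Equiv.Perm X} {W : Set X} (h : ⇑σ '' W = W) :
    ∀ k, ⇑(σ ^ k) '' W = W := by
  intro k
  induction k with
  | zero => simp
  | succ k ihk =>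
    rw [pow_succ', Equiv.Perm.coe_mul, Set.image_comp, ihk, h]

variable (hS : ∀ i, S i = Sp i ∪ Sm i)
  (h1 : ∀ i, ⇑(φ (raagGen G i)) '' Sp i ⊆ Sp i ∧ ⇑(φ (raagGen G i))⁻¹ '' Sm i ⊆ Sm i)
  (h2 : ∀ i j, i ≠ j → Commute (raagGen G i) (raagGen G j) →
    ⇑(φ (raagGen G i)) '' S j = S j)
  (h3 : ∀ i j, ¬ Commute (raagGen G i) (raagGen G j) →
    ⇑(φ (raagGen G i)) '' S j ⊆ Sp i ∧ ⇑(φ (raagGen G i))⁻¹ '' S j ⊆ Sm i)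
  (hU2 : ∀ i, ⇑(φ (raagGen G i)) '' U ⊆ Sp i ∧ ⇑(φ (raagGen G i))⁻¹ '' U ⊆ Sm i)

lemma rGen_false (i : Fin n) : rGen G (i, false) = (raagGen G i)⁻¹ := rfl

lemma rGen_true (i : Fin n) : rGen G (i, true) = raagGen G i := rfl

include hS in
lemma Pm_subset (i : Fin n) (b : Bool) : (if b then Sp i else Sm i) ⊆ S i := by
  rw [hS i]; cases b <;> simp

include hU2 in
lemma imgU (i : Fin n) (b : Bool) :
    ⇑(φ (rGen G (i, b))) '' U ⊆ (if b then Sp i else Sm i) := by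
  cases b
  · show ⇑(φ (rGen G (i, false))) '' U ⊆ Sm i
    rw [rGen_false, map_inv]
    exact (hU2 i).2
  · show ⇑(φ (rGen G (i, true))) '' U ⊆ Sp i
    rw [rGen_true]
    exact (hU2 i).1

include h1 in
lemma imgPm (i : Fin n) (b : Bool) :
    ⇑(φ (rGen G (i, b))) '' (if b then Sp i else Sm i) ⊆ (if b then Sp i else Sm i) := by
  cases b
  · show ⇑(φ (rGen G (i, false))) '' Sm i ⊆ Sm i
    rw [rGen_false, map_inv]
    exact (h1 i).2
  · show ⇑(φ (rGen G (i, true))) '' Sp i ⊆ Sp i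
    rw [rGen_true]
    exact (h1 i).1

include h3 in
lemma imgS_noncomm (i : Fin n) (b : Bool) (j : Fin n)
    (h : ¬ Commute (raagGen G i) (raagGen G j)) :
    ⇑(φ (rGen G (i, b))) '' S j ⊆ (if b then Sp i else Sm i) := by
  cases b
  · show ⇑(φ (rGen G (i, false))) '' S j ⊆ Sm i
    rw [rGen_false, map_inv]
    exact (h3 i j h).2
  · show ⇑(φ (rGen G (i, true))) '' S j ⊆ Sp i
    rw [rGen_true]
    exact (h3 i j h).1

include h2 in
lemma imgS_comm (i : Fin n) (b : Bool) (j : Fin n) (hij : i ≠ j)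
    (h : Commute (raagGen G i) (raagGen G j)) :
    ⇑(φ (rGen G (i, b))) '' S j = S j := by
  have key := h2 i j hij h
  cases b
  · rw [rGen_false, map_inv]
    calc ⇑(φ (raagGen G i))⁻¹ '' S j
        = ⇑(φ (raagGen G i))⁻¹ '' (⇑(φ (raagGen G i)) '' S j) := by rw [key]
      _ = S j := by rw [← Set.image_comp]; simp
  · rw [rGen_true]
    exact key

-- Ping-pong core: a nonempty irreducible word moves `U` into some `S j`.
include hS h1 h2 h3 hU2 in
lemma ping_core : ∀ (N : ℕ) (L : List (Fin n × Bool)), L.length ≤ N →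
    ¬ Reducible G L → L ≠ [] →
    ∃ (j : Fin n) (c : Bool), IsHead G L j c ∧ ⇑(φ (rEv G L)) '' U ⊆ S j := by
  intro N
  induction N with
  | zero =>
    intro L hlen _ hne
    cases L with
    | nil => exact absurd rfl hne
    | cons p L' => simp at hlen
  | succ N ih =>
    intro L hlen hred hne
    cases L with
    | nil => exact absurd rfl hne
    | cons p L' =>
    obtain ⟨i, b⟩ := p
    have hhead : IsHead G ((i, b) :: L') i b := ⟨[], L', by simp, rfl⟩
    have hnb : ¬ IsHead G ((i, b) :: L') i (!b) := fun h =>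
      hred (head_head_reducible G hhead h)
    obtain ⟨m, L₂, hev, hred₂, hnh₂, hlen₂, hlift, hm⟩ :=
      extract_all G ((i, b) :: L').length ((i, b) :: L') le_rfl hred i b hnb
    have hm1 : 1 ≤ m := by
      rcases hm with heq | h
      · exact absurd (heq ▸ hhead) (hnh₂ b)
      · exact h
    obtain ⟨k, rfl⟩ : ∃ k, m = k + 1 := ⟨m - 1, by omega⟩
    have himg : ⇑(φ (rEv G ((i, b) :: L'))) '' U
        = ⇑((φ (rGen G (i, b))) ^ (k + 1)) '' (⇑(φ (rEv G L₂)) '' U) := by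
      rw [hev, map_mul, map_pow, Equiv.Perm.coe_mul, Set.image_comp]
    by_cases hL₂ : L₂ = []
    · subst hL₂
      refine ⟨i, b, hhead, ?_⟩
      rw [himg]
      have hid : ⇑(φ (rEv G ([] : List (Fin n × Bool)))) '' U = U := by
        rw [rEv_nil, map_one]; simp
      rw [hid]
      exact (pow_img (imgU G φ Sp Sm U hU2 i b) (imgPm G φ Sp Sm h1 i b) k).trans
        (Pm_subset Sp Sm S hS i b)
    · have hlenL₂ : L₂.length ≤ N := by
        simp only [List.length_cons] at hlen₂ hlen; omega
      obtain ⟨j, c, hhead₂, himg₂⟩ := ih L₂ hlenL₂ hred₂ hL₂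
      have hji : j ≠ i := fun h => hnh₂ c (h ▸ hhead₂)
      by_cases hcomm : Commute (raagGen G i) (raagGen G j)
      · have hadj : G.Adj i j := commute_adj G hji.symm hcomm
        refine ⟨j, c, hlift j c hadj hhead₂, ?_⟩
        rw [himg]
        have hSj := imgS_comm G φ S h2 i b j hji.symm hcomm
        calc ⇑((φ (rGen G (i, b))) ^ (k + 1)) '' (⇑(φ (rEv G L₂)) '' U)
            ⊆ ⇑((φ (rGen G (i, b))) ^ (k + 1)) '' S j := Set.image_mono himg₂
          _ = S j := pow_img_eq hSj (k + 1)
      · refine ⟨i, b, hhead, ?_⟩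
        rw [himg]
        have h0 : ⇑(φ (rGen G (i, b))) '' (⇑(φ (rEv G L₂)) '' U)
            ⊆ (if b then Sp i else Sm i) :=
          (Set.image_mono himg₂).trans (imgS_noncomm G φ Sp Sm S h3 i b j hcomm)
        exact (pow_img h0 (imgPm G φ Sp Sm h1 i b) k).trans (Pm_subset Sp Sm S hS i b)

end Main

/-- Reducing a word to an irreducible one with the same evaluation. -/
lemma exists_irreducible : ∀ (N : ℕ) (L : List (Fin n × Bool)), L.length ≤ N →
    ∃ L', ¬ Reducible G L' ∧ rEv G L' = rEv G L := by
  intro N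
  induction N with
  | zero =>
    intro L hlen
    refine ⟨L, ?_, rfl⟩
    rintro ⟨A, B, C, i, b, _, rfl⟩
    simp at hlen
  | succ N ih =>
    intro L hlen
    by_cases hred : Reducible G L
    · obtain ⟨A, B, C, i, b, hB, rfl⟩ := hred
      have hkey : rEv G (A ++ (i, b) :: (B ++ (i, !b) :: C)) = rEv G (A ++ (B ++ C)) := by
        have hcomB : Commute (rGen G (i, b)) (rEv G B) := by
          refine Commute.list_prod_right _ _ ?_
          intro x hx
          rcases List.mem_map.1 hx with ⟨q, hq, rfl⟩
          exact rGen_commute G (hB q hq)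
        rw [rEv_append, rEv_cons, rEv_append, rEv_cons, rEv_append, rEv_append]
        congr 1
        rw [← mul_assoc, hcomB.eq, mul_assoc, ← mul_assoc (rGen G (i, b)),
          rGen_cancel, one_mul]
      have hlen2 : (A ++ (B ++ C)).length ≤ N := by
        simp only [List.length_append, List.length_cons] at hlen ⊢; omega
      obtain ⟨L', hL'1, hL'2⟩ := ih (A ++ (B ++ C)) hlen2
      exact ⟨L', hL'1, by rw [hL'2, hkey]⟩
    · exact ⟨L, hred, rfl⟩

/-- Every element of the RAAG is represented by some word. -/
lemma exists_word (g : RAAG G) : ∃ L, rEv G L = g := by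
  obtain ⟨z, rfl⟩ := PresentedGroup.mk_surjective (raagRels G) g
  induction z using FreeGroup.induction_on with
  | C1 => exact ⟨[], by rw [rEv_nil, map_one]; rfl⟩
  | of x => exact ⟨[(x, true)], by rw [rEv_cons, rEv_nil, mul_one]; rfl⟩
  | inv_of x _ =>
    exact ⟨[(x, false)], by rw [rEv_cons, rEv_nil, mul_one, map_inv]; rfl⟩
  | mul x y hx hy =>
    obtain ⟨L1, hL1⟩ := hx
    obtain ⟨L2, hL2⟩ := hy
    exact ⟨L1 ++ L2, by rw [rEv_append, hL1, hL2, map_mul]; rfl⟩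

end RaagPP


/-- Strengthened ping-pong conclusion: the translates of `U` are pairwise disjoint. -/
theorem raag_ping_pong_disjoint {n : ℕ} (G : SimpleGraph (Fin n)) {X : Type*}
    (φ : RAAG G →* Equiv.Perm X)
    (Sp Sm S : Fin n → Set X) (hS : ∀ i, S i = Sp i ∪ Sm i)
    (h1 : ∀ i, ⇑(φ (raagGen G i)) '' Sp i ⊆ Sp i ∧
      ⇑(φ (raagGen G i))⁻¹ '' Sm i ⊆ Sm i)
    (h2 : ∀ i j, i ≠ j → Commute (raagGen G i) (raagGen G j) →
      ⇑(φ (raagGen G i)) '' S j = S j)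
    (h3 : ∀ i j, ¬ Commute (raagGen G i) (raagGen G j) →
      ⇑(φ (raagGen G i)) '' S j ⊆ Sp i ∧ ⇑(φ (raagGen G i))⁻¹ '' S j ⊆ Sm i)
    (U : Set X) (hUne : U.Nonempty) (hU : U ⊆ (⋃ i, S i)ᶜ)
    (hU2 : ∀ i, ⇑(φ (raagGen G i)) '' U ⊆ Sp i ∧ ⇑(φ (raagGen G i))⁻¹ '' U ⊆ Sm i) :
    ∀ g h : RAAG G, g ≠ h → Disjoint (⇑(φ g) '' U) (⇑(φ h) '' U) := by
  intro g h hgh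
  set k := g⁻¹ * h with hk
  have hk1 : k ≠ 1 := fun h1 => hgh (inv_mul_eq_one.mp h1)
  obtain ⟨L0, hL0⟩ := RaagPP.exists_word G k
  obtain ⟨L, hLred, hLev⟩ := RaagPP.exists_irreducible G L0.length L0 le_rfl
  have hLne : L ≠ [] := by
    rintro rfl
    exact hk1 (by rw [← hL0, ← hLev, RaagPP.rEv_nil])
  obtain ⟨j, c, _, himg⟩ := RaagPP.ping_core G φ Sp Sm S U hS h1 h2 h3 hU2
    L.length L le_rfl hLred hLne
  rw [hLev, hL0] at himg
  have hdisjU : Disjoint U (⇑(φ k) '' U) := by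
    rw [Set.disjoint_left]
    intro x hxU hximg
    exact (hU hxU) (Set.mem_iUnion.2 ⟨j, himg hximg⟩)
  have hcomp : ⇑(φ h) '' U = ⇑(φ g) '' (⇑(φ k) '' U) := by
    rw [← Set.image_comp, ← Equiv.Perm.coe_mul, ← map_mul, hk, ← mul_assoc,
      mul_inv_cancel, one_mul]
  have hUim : (U : Set X) = ⇑(φ g) '' (⇑(φ g)⁻¹ '' U) := by
    rw [← Set.image_comp]; simp
  rw [hcomp]
  refine (Set.disjoint_image_iff (Equiv.injective (φ g))).2 ?_
  rw [Set.disjoint_left]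
  intro x hxU hximg
  exact (hU hxU) (Set.mem_iUnion.2 ⟨j, himg hximg⟩)
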